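/- Let p be a prime and let k be an integer with 2 ≤ k ≤ √(p/(2 log p + 1)) − 1. If A is a multiset in (Z/pZ)^2 \ {0} with |A| = p + k and #ΣA < (k+2)p, then there exists a nontrivial proper subgroup of (Z/pZ)^2 containing at least p elements of A counted with multiplicity. -/

import Mathlib

/-- The sumset ΣA of a multiset A: all sums of submultisets of A (including the empty sum 0). -/
def sumset {G : Type*} [AddCommMonoid G] (A : Multiset G) : Set G :=
  {x | ∃ B ≤ A, B.sum = x}

open scoped Classical in
/-- The number of elements of the multiset A (with multiplicity) lying in the subgroup H. -/
noncomputable def inCount {G : Type*} [AddCommGroup G] (A : Multiset G) (H : AddSubgroup G) : ℕ :=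
  Multiset.card (A.filter (fun x => x ∈ H))

/-- A multiset in (Z/pZ)² is valid if 0 ∉ A and every nontrivial (cyclic) subgroup contains
fewer than p elements of A, counted with multiplicity. -/
def ValidMS (p : ℕ) (A : Multiset (ZMod p × ZMod p)) : Prop :=
  (0 : ZMod p × ZMod p) ∉ A ∧
    ∀ x : ZMod p × ZMod p, x ≠ 0 → inCount A (AddSubgroup.zmultiples x) < p

open Finset AddSubgroup

namespace Stmt14

/-- Finset of all submultiset sums. -/
def SFin {M : Type*} [AddCommMonoid M] [DecidableEq M] (X : Multiset M) : Finset M :=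
  (X.powerset.map Multiset.sum).toFinset

lemma mem_SFin {M : Type*} [AddCommMonoid M] [DecidableEq M] {X : Multiset M} {a : M} :
    a ∈ SFin X ↔ ∃ B ≤ X, B.sum = a := by
  simp [SFin, Multiset.mem_toFinset, Multiset.mem_map, Multiset.mem_powerset]

lemma zero_mem_SFin {M : Type*} [AddCommMonoid M] [DecidableEq M] (X : Multiset M) :
    (0 : M) ∈ SFin X := mem_SFin.2 ⟨0, zero_le, rfl⟩

lemma SFin_nonempty {M : Type*} [AddCommMonoid M] [DecidableEq M] (X : Multiset M) :
    (SFin X).Nonempty := ⟨0, zero_mem_SFin X⟩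

lemma SFin_mono {M : Type*} [AddCommMonoid M] [DecidableEq M] {X Y : Multiset M} (h : X ≤ Y) :
    SFin X ⊆ SFin Y := by
  intro a ha
  obtain ⟨B, hB, rfl⟩ := mem_SFin.1 ha
  exact mem_SFin.2 ⟨B, le_trans hB h, rfl⟩

lemma SFin_zero {M : Type*} [AddCommMonoid M] [DecidableEq M] :
    SFin (0 : Multiset M) = {0} := by
  ext a; simp [mem_SFin, Multiset.le_zero, eq_comm]

lemma SFin_cons {M : Type*} [AddCommMonoid M] [DecidableEq M] (x : M) (X : Multiset M) :
    SFin (x ::ₘ X) = SFin X ∪ (SFin X).image (fun s => x + s) := by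
  unfold SFin
  rw [Multiset.powerset_cons, Multiset.map_add, Multiset.toFinset_add, Multiset.map_map,
    Multiset.toFinset_map]
  congr 1
  have : (Multiset.sum ∘ Multiset.cons x) = (fun B => x + Multiset.sum B) := by
    funext B; simp
  rw [this]
  have : (fun B => x + Multiset.sum B) = (fun s => x + s) ∘ Multiset.sum := rfl
  rw [this, ← Multiset.map_map, Multiset.toFinset_map, Multiset.toFinset_map]





section Orbit
variable {p : ℕ} [Fact p.Prime] {M : Type*} [AddCommGroup M] [Module (ZMod p) M]
  [DecidableEq M]

/-- If D is a nonempty finset with fewer than p elements and x has "order p",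
then some element of D leaves D after adding x. -/
lemma exists_add_not_mem (D : Finset M) (hD : D.Nonempty) (hDcard : D.card < p)
    (x : M) (hx : ∀ n : ZMod p, n ≠ 0 → n • x ≠ 0) :
    ∃ d ∈ D, d + x ∉ D := by
  haveI : NeZero p := ⟨(Fact.out : p.Prime).ne_zero⟩
  by_contra hcon
  push_neg at hcon
  obtain ⟨d₀, hd₀⟩ := hD
  have key : ∀ n : ℕ, d₀ + n • x ∈ D := by
    intro n
    induction n with
    | zero => simpa using hd₀
    | succ n ih =>
      have : d₀ + (n+1) • x = (d₀ + n • x) + x := by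
        rw [succ_nsmul, add_assoc]
      rw [this]
      exact hcon _ ih
  have hmaps : ∀ m : ZMod p, d₀ + m • x ∈ D := by
    intro m
    have h1 : ((m.val : ℕ) : ZMod p) = m := (ZMod.natCast_val m).trans (ZMod.cast_id _ _)
    have h2 : m • x = (m.val : ℕ) • x := by
      rw [← Nat.cast_smul_eq_nsmul (ZMod p) m.val x, h1]
    rw [h2]; exact key _
  have hinj : Set.InjOn (fun m : ZMod p => d₀ + m • x) (Finset.univ : Finset (ZMod p)) := by
    intro m _ m' _ h
    simp only [add_right_inj] at h
    by_contra hne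
    have : (m - m') • x ≠ 0 := hx _ (sub_ne_zero.2 hne)
    rw [sub_smul, h, sub_self] at this
    exact this rfl
  have := Finset.card_le_card_of_injOn _ (fun m _ => hmaps m) hinj
  rw [Finset.card_univ, ZMod.card] at this
  omega

end Orbit

section Olson
variable {p : ℕ} [Fact p.Prime] {M : Type*} [AddCommMonoid M] [DecidableEq M]

/-- Olson's theorem in `ZMod p`, in image form: if all elements of X map to nonzero
elements of ZMod p, the image of the subset sums has at least min p (|X|+1) elements. -/
lemma olson (X : Multiset M) (f : M →+ ZMod p) (hf : ∀ y ∈ X, f y ≠ 0) :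
    min p (Multiset.card X + 1) ≤ ((SFin X).image f).card := by
  haveI : NeZero p := ⟨(Fact.out : p.Prime).ne_zero⟩
  induction X using Multiset.induction_on with
  | empty => simpa [SFin_zero] using min_le_right p 1
  | cons x X ih =>
    have hfx : f x ≠ 0 := hf x (Multiset.mem_cons_self x X)
    have hfX : ∀ y ∈ X, f y ≠ 0 := fun y hy => hf y (Multiset.mem_cons_of_mem hy)
    have ih' := ih hfX
    set S : Finset (ZMod p) := (SFin X).image f with hS
    have himg : (SFin (x ::ₘ X)).image f = S ∪ S.image (fun s => f x + s) := by
      rw [SFin_cons, Finset.image_union, Finset.image_image, Finset.image_image]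
      congr 1
      ext a
      simp only [Finset.mem_image, Function.comp_apply]
      constructor
      · rintro ⟨b, hb, rfl⟩; exact ⟨b, hb, by simp⟩
      · rintro ⟨b, hb, rfl⟩; exact ⟨b, hb, by simp⟩
    rw [himg]
    rcases le_or_gt p S.card with hc | hc
    · calc min p (Multiset.card (x ::ₘ X) + 1) ≤ p := min_le_left _ _
        _ ≤ S.card := hc
        _ ≤ (S ∪ S.image (fun s => f x + s)).card :=
          Finset.card_le_card (Finset.subset_union_left)
    · have hSne : S.Nonempty := (SFin_nonempty X).image f
      obtain ⟨d, hd, hdx⟩ := exists_add_not_mem (p := p) S hSne hc (f x)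
        (fun n hn => by
          rw [smul_eq_mul]
          exact mul_ne_zero hn hfx)
      have hdxmem : d + f x ∈ S.image (fun s => f x + s) :=
        Finset.mem_image.2 ⟨d, hd, by rw [add_comm]⟩
      have hcard : S.card + 1 ≤ (S ∪ S.image (fun s => f x + s)).card := by
        have hsub : insert (d + f x) S ⊆ S ∪ S.image (fun s => f x + s) := by
          intro a ha
          rcases Finset.mem_insert.1 ha with rfl | ha
          · exact Finset.mem_union_right _ hdxmem
          · exact Finset.mem_union_left _ ha
        calc S.card + 1 = (insert (d + f x) S).card := (Finset.card_insert_of_notMem hdx).symm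
          _ ≤ _ := Finset.card_le_card hsub
      have : min p (Multiset.card X + 1) + 1 ≤ S.card + 1 := by omega
      calc min p (Multiset.card (x ::ₘ X) + 1) ≤ min p (Multiset.card X + 1) + 1 := by
            simp only [Multiset.card_cons]
            rcases le_or_gt p (Multiset.card X + 1) with h | h
            · have : min p (Multiset.card X + 1) = p := min_eq_left h
              omega
            · have h1 : min p (Multiset.card X + 1) = Multiset.card X + 1 := min_eq_right (by omega)
              have h2 : min p (Multiset.card X + 1 + 1) ≤ Multiset.card X + 1 + 1 := min_le_right _ _
              omega
        _ ≤ S.card + 1 := this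
        _ ≤ _ := hcard
end Olson
section Homs
variable {p : ℕ} [Fact p.Prime]

abbrev Gp (p : ℕ) := ZMod p × ZMod p

/-- The linear form (u,v) ↦ c*u + d*v as an AddMonoidHom. -/
def mk2 (c d : ZMod p) : Gp p →+ ZMod p :=
  AddMonoidHom.mk' (fun y => c * y.1 + d * y.2) (by intro a b; simp; ring)

@[simp] lemma mk2_apply (c d : ZMod p) (y : Gp p) : mk2 c d y = c * y.1 + d * y.2 := rfl

lemma smul_mem_zmultiples (m : ZMod p) (x : Gp p) : m • x ∈ zmultiples x := by
  haveI : NeZero p := ⟨(Fact.out : p.Prime).ne_zero⟩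
  refine AddSubgroup.mem_zmultiples_iff.2 ⟨(m.val : ℤ), ?_⟩
  rw [← Int.cast_smul_eq_zsmul (ZMod p) (m.val : ℤ) x]
  congr 1
  push_cast
  exact (ZMod.natCast_val m).trans (ZMod.cast_id _ _)

/-- The canonical hom with kernel the line through x. -/
def lineHom (x : Gp p) : Gp p →+ ZMod p := mk2 x.2 (- x.1)

lemma lineHom_self (x : Gp p) : lineHom x x = 0 := by
  simp [lineHom]; ring

lemma mem_line_of_lineHom_eq_zero {x y : Gp p} (hx : x ≠ 0) (h : lineHom x y = 0) :
    y ∈ zmultiples x := by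
  obtain ⟨a, b⟩ := x
  obtain ⟨u, v⟩ := y
  simp only [lineHom, mk2_apply, neg_mul] at h
  have hab : a ≠ 0 ∨ b ≠ 0 := by
    by_contra hc; push_neg at hc; exact hx (by simp [hc.1, hc.2, Prod.ext_iff])
  rcases eq_or_ne a 0 with ha | ha
  · have hb : b ≠ 0 := by tauto
    have hu : u = 0 := by
      have : b * u = 0 := by rw [ha] at h; linear_combination h
      exact (mul_eq_zero.1 this).resolve_left hb
    have : (v * b⁻¹) • ((a, b) : Gp p) = (u, v) := by
      simp [Prod.ext_iff, ha, hu, smul_eq_mul]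
      field_simp
    exact this ▸ smul_mem_zmultiples _ _
  · have hba : b * u = a * v := by linear_combination h
    have : (a⁻¹ * u) • ((a, b) : Gp p) = (u, v) := by
      have h1 : a⁻¹ * u * a = u := by rw [mul_comm a⁻¹ u, mul_assoc, inv_mul_cancel₀ ha, mul_one]
      have h2 : a⁻¹ * u * b = v := by
        field_simp
        linear_combination hba
      simp [Prod.ext_iff, smul_eq_mul, h1, h2]
    exact this ▸ smul_mem_zmultiples _ _

lemma lineHom_ne_zero {x y : Gp p} (hx : x ≠ 0) (hy : y ∉ zmultiples x) :
    lineHom x y ≠ 0 := fun h => hy (mem_line_of_lineHom_eq_zero hx h)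

/-- A hom which is nonzero on the nonzero points of the line through x. -/
lemma exists_coHom (x : Gp p) (hx : x ≠ 0) :
    ∃ ψ : Gp p →+ ZMod p, ∀ y ∈ zmultiples x, y ≠ 0 → ψ y ≠ 0 := by
  obtain ⟨a, b⟩ := x
  have hab : a ≠ 0 ∨ b ≠ 0 := by
    by_contra hc; push_neg at hc; exact hx (by simp [hc.1, hc.2, Prod.ext_iff])
  have main : ∀ ψ : Gp p →+ ZMod p, ψ (a, b) = 1 →
      ∀ y ∈ zmultiples ((a, b) : Gp p), y ≠ 0 → ψ y ≠ 0 := by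
    intro ψ hψ1 y hy hyne
    obtain ⟨n, rfl⟩ := AddSubgroup.mem_zmultiples_iff.1 hy
    rw [map_zsmul, hψ1]
    intro hcon
    apply hyne
    have : ((n : ZMod p)) • ((a,b) : Gp p) = n • ((a,b) : Gp p) :=
      Int.cast_smul_eq_zsmul (ZMod p) n _
    rw [← this]
    have hn0 : (n : ZMod p) = 0 := by
      have : (n : ZMod p) = n • (1 : ZMod p) := by simp
      rw [← this] at hcon; exact hcon
    rw [hn0, zero_smul]
  rcases eq_or_ne a 0 with ha | ha
  · have hb : b ≠ 0 := by tauto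
    refine ⟨mk2 0 b⁻¹, main _ ?_⟩
    simp [hb]
  · refine ⟨mk2 a⁻¹ 0, main _ ?_⟩
    simp [ha]
end Homs

section Growth
variable {p : ℕ} [Fact p.Prime]

lemma smul_ne_zero' {x : Gp p} (hx : x ≠ 0) : ∀ n : ZMod p, n ≠ 0 → n • x ≠ 0 :=
  fun n hn h => hx ((smul_eq_zero.1 h).resolve_left hn)

lemma growth_step (x : Gp p) (hx : x ≠ 0) (Y : Multiset (Gp p)) :
    (SFin Y).card +
      (min p (Multiset.card (Y.filter (fun y => lineHom x y ≠ 0)) + 1) - (SFin Y).card / p)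
      ≤ (SFin (x ::ₘ Y)).card := by
  classical
  haveI : NeZero p := ⟨(Fact.out : p.Prime).ne_zero⟩
  have hppos : 0 < p := (Fact.out : p.Prime).pos
  set φ := lineHom x with hφ
  set T := SFin Y with hT
  set T' := SFin (x ::ₘ Y) with hT'
  set joff := Multiset.card (Y.filter (fun y => φ y ≠ 0)) with hjoff
  have hTT' : T ⊆ T' := SFin_mono (Multiset.le_cons_self Y x)
  set touched := T.image φ with htouched
  set bad := touched.filter (fun v => ¬ (T.filter (fun y => φ y = v)).card < p) with hbad
  set good := touched.filter (fun v => (T.filter (fun y => φ y = v)).card < p) with hgood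
  -- 1. Olson bound on touched
  have h1 : min p (joff + 1) ≤ touched.card := by
    have holson := olson (p := p) (Y.filter (fun y => φ y ≠ 0)) φ
      (fun y hy => (Multiset.mem_filter.1 hy).2)
    refine le_trans holson (Finset.card_le_card ?_)
    apply Finset.image_subset_image
    exact SFin_mono (Multiset.filter_le _ Y)
  -- 2. bad count bound
  have h2 : bad.card * p ≤ T.card := by
    have hsum : T.card = ∑ v ∈ touched, (T.filter (fun y => φ y = v)).card :=
      Finset.card_eq_sum_card_image φ T
    have : ∑ v ∈ bad, p ≤ ∑ v ∈ bad, (T.filter (fun y => φ y = v)).card :=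
      Finset.sum_le_sum (fun v hv => not_lt.1 (Finset.mem_filter.1 hv).2)
    have hle : ∑ v ∈ bad, (T.filter (fun y => φ y = v)).card
        ≤ ∑ v ∈ touched, (T.filter (fun y => φ y = v)).card :=
      Finset.sum_le_sum_of_subset (Finset.filter_subset _ _)
    simp only [Finset.sum_const, smul_eq_mul] at this
    omega
  have h2' : bad.card ≤ T.card / p := Nat.le_div_iff_mul_le hppos |>.2 h2
  -- 3. good count
  have h3 : touched.card ≤ good.card + bad.card := by
    exact le_of_eq (Finset.card_filter_add_card_filter_not
      (s := touched) (p := fun v => (T.filter (fun y => φ y = v)).card < p)).symm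
  -- 4. witnesses
  have h4 : ∀ v ∈ good, ∃ w, w ∈ T' \ T ∧ φ w = v := by
    intro v hv
    obtain ⟨hvt, hvlt⟩ := Finset.mem_filter.1 hv
    set D := T.filter (fun y => φ y = v) with hD
    have hDne : D.Nonempty := by
      obtain ⟨y, hy, hyv⟩ := Finset.mem_image.1 hvt
      exact ⟨y, Finset.mem_filter.2 ⟨hy, hyv⟩⟩
    obtain ⟨d, hd, hdx⟩ := exists_add_not_mem (p := p) D hDne hvlt x (smul_ne_zero' hx)
    have hdT : d ∈ T := (Finset.mem_filter.1 hd).1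
    have hdv : φ d = v := (Finset.mem_filter.1 hd).2
    refine ⟨d + x, Finset.mem_sdiff.2 ⟨?_, ?_⟩, ?_⟩
    · rw [hT', SFin_cons]
      exact Finset.mem_union_right _ (Finset.mem_image.2 ⟨d, hdT, by rw [add_comm]⟩)
    · intro hmem
      exact hdx (Finset.mem_filter.2 ⟨hmem, by rw [map_add, hdv, lineHom_self, add_zero]⟩)
    · rw [map_add, hdv, lineHom_self, add_zero]
  -- 5. injection from good into T' \ T
  have h5 : good.card ≤ (T' \ T).card := by
    have : ∀ v ∈ good, (if h : ∃ w, w ∈ T' \ T ∧ φ w = v then h.choose else 0) ∈ T' \ T := by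
      intro v hv
      rw [dif_pos (h4 v hv)]
      exact (h4 v hv).choose_spec.1
    refine Finset.card_le_card_of_injOn _ this ?_
    intro v hv v' hv' heq
    have e1 : φ (if h : ∃ w, w ∈ T' \ T ∧ φ w = v then h.choose else 0) = v := by
      rw [dif_pos (h4 v hv)]; exact (h4 v hv).choose_spec.2
    have e2 : φ (if h : ∃ w, w ∈ T' \ T ∧ φ w = v' then h.choose else 0) = v' := by
      rw [dif_pos (h4 v' hv')]; exact (h4 v' hv').choose_spec.2
    simp only [] at heq
    rw [← e1, ← e2, heq]
  have h6 : T'.card = (T' \ T).card + T.card := (Finset.card_sdiff_add_card_eq_card hTT').symm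
  omega

end Growth

section Numeric

lemma numeric_key {p k : ℕ} (hp : p.Prime) (hk2 : 2 ≤ k)
    (hk : (k : ℝ) ≤ Real.sqrt ((p : ℝ) / (2 * Real.log p + 1)) - 1) :
    7 * (k + 1)^2 ≤ p := by
  have hp2 : (2:ℝ) ≤ (p:ℝ) := by exact_mod_cast hp.two_le
  have hlogp2 : Real.log 2 ≤ Real.log p := Real.log_le_log (by norm_num) hp2
  have hlog2 : (0.6931471803 : ℝ) < Real.log 2 := Real.log_two_gt_d9
  have hL : (0:ℝ) < 2 * Real.log p + 1 := by nlinarith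
  have hsq : ((k:ℝ) + 1)^2 ≤ (p:ℝ) / (2 * Real.log p + 1) := by
    have h1 : (k:ℝ) + 1 ≤ Real.sqrt ((p : ℝ) / (2 * Real.log p + 1)) := by linarith
    have h2 : (0:ℝ) ≤ (p:ℝ) / (2 * Real.log p + 1) := by positivity
    calc ((k:ℝ)+1)^2 ≤ Real.sqrt ((p : ℝ) / (2 * Real.log p + 1))^2 := by
          have hk0 : (0:ℝ) ≤ (k:ℝ) + 1 := by positivity
          nlinarith [Real.sqrt_nonneg ((p : ℝ) / (2 * Real.log p + 1))]
      _ = (p:ℝ) / (2 * Real.log p + 1) := Real.sq_sqrt h2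
  have hmul : ((k:ℝ)+1)^2 * (2 * Real.log p + 1) ≤ p := by
    rw [← le_div_iff₀ hL]; exact hsq
  have hk9 : (9:ℝ) ≤ ((k:ℝ)+1)^2 := by
    have : (2:ℝ) ≤ (k:ℝ) := by exact_mod_cast hk2
    nlinarith
  -- step 1 : p ≥ 22
  have hp22 : (22:ℝ) ≤ (p:ℝ) := by
    have : (9:ℝ) * (2 * Real.log p + 1) ≤ p := by nlinarith
    have h21 : (21.4 : ℝ) < 9 * (2 * Real.log p + 1) := by nlinarith
    have : (21.4:ℝ) < p := by linarith
    have : (21:ℕ) < p := by exact_mod_cast (by linarith : (21:ℝ) < (p:ℝ))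
    exact_mod_cast (by omega : 22 ≤ p)
  -- step 2 : log p ≥ 3
  have hexp3 : Real.exp 3 < 22 := by
    have h1 : Real.exp 3 = Real.exp 1 ^ (3:ℕ) := by
      rw [← Real.exp_nat_mul]; norm_num
    have h2 : Real.exp 1 ^ (3:ℕ) < (2.7182818286:ℝ)^(3:ℕ) := by
      gcongr
      exact Real.exp_one_lt_d9
    rw [h1]
    calc Real.exp 1 ^ (3:ℕ) < (2.7182818286:ℝ)^(3:ℕ) := h2
      _ < 22 := by norm_num
  have hlog3 : (3:ℝ) ≤ Real.log p := by
    have : Real.exp 3 ≤ (p:ℝ) := by linarith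
    calc (3:ℝ) = Real.log (Real.exp 3) := (Real.log_exp 3).symm
      _ ≤ Real.log p := Real.log_le_log (Real.exp_pos 3) this
  have hfin : (7:ℝ) * ((k:ℝ)+1)^2 ≤ p := by nlinarith
  have : ((7 * (k+1)^2 : ℕ) : ℝ) ≤ (p:ℝ) := by push_cast; nlinarith
  exact_mod_cast this

end Numeric

section Fiber
variable {p : ℕ} [Fact p.Prime]

lemma lineHom_line_zero {x : Gp p} {y : Gp p} (hy : y ∈ zmultiples x) : lineHom x y = 0 := by
  obtain ⟨n, rfl⟩ := AddSubgroup.mem_zmultiples_iff.1 hy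
  rw [map_zsmul, lineHom_self, smul_zero]

/-- The large-line case: if some line contains between k+1 and p-1 elements of A,
then the sumset has at least (k+2)p elements. -/
lemma fiber_case {k : ℕ} {A : Multiset (Gp p)} (h0 : (0 : Gp p) ∉ A)
    (hcard : Multiset.card A = p + k)
    {x₀ : Gp p} (hx₀ : x₀ ≠ 0)
    (hc1 : k + 1 ≤ Multiset.card (A.filter (fun y => y ∈ zmultiples x₀)))
    (hc2 : Multiset.card (A.filter (fun y => y ∈ zmultiples x₀)) < p) :
    (k + 2) * p ≤ (SFin A).card := by
  classical
  set L := zmultiples x₀ with hL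
  set onM := A.filter (fun y => y ∈ L) with honM
  set offM := A.filter (fun y => ¬ y ∈ L) with hoffM
  set c := Multiset.card onM with hc
  set t := Multiset.card offM with ht
  have hct : c + t = p + k := by
    have := Multiset.filter_add_not (fun y => y ∈ L) A
    calc c + t = Multiset.card (onM + offM) := by rw [Multiset.card_add]
      _ = p + k := by rw [this, hcard]
  set φ := lineHom x₀ with hφ
  -- the vertical sums
  obtain ⟨ψ, hψ⟩ := exists_coHom x₀ hx₀
  have hWcard : c + 1 ≤ (SFin onM).card := by
    have holson := olson (p := p) onM ψ (fun y hy => by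
      have hyA : y ∈ A := Multiset.mem_of_le (Multiset.filter_le _ A) hy
      exact hψ y (Multiset.mem_filter.1 hy).2 (fun h => h0 (h ▸ hyA)))
    have himg : ((SFin onM).image ψ).card ≤ (SFin onM).card := Finset.card_image_le
    have : min p (c + 1) = c + 1 := min_eq_right (by omega)
    omega
  -- the horizontal fibers
  set V := (SFin offM).image φ with hV
  have hVcard : t + 1 ≤ V.card := by
    have holson := olson (p := p) offM φ (fun y hy =>
      lineHom_ne_zero hx₀ (Multiset.mem_filter.1 hy).2)
    have : min p (t + 1) = t + 1 := min_eq_right (by omega)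
    rw [hV]
    omega
  -- choice of fiber representatives
  have hrep : ∀ v ∈ V, ∃ b ∈ SFin offM, φ b = v := by
    intro v hv
    obtain ⟨b, hb, hbv⟩ := Finset.mem_image.1 hv
    exact ⟨b, hb, hbv⟩
  set g : ZMod p → Gp p := fun v => if h : ∃ b ∈ SFin offM, φ b = v then h.choose else 0 with hg
  have hgmem : ∀ v ∈ V, g v ∈ SFin offM := by
    intro v hv
    rw [hg]; simp only
    rw [dif_pos (hrep v hv)]
    exact (hrep v hv).choose_spec.1
  have hgval : ∀ v ∈ V, φ (g v) = v := by
    intro v hv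
    rw [hg]; simp only
    rw [dif_pos (hrep v hv)]
    exact (hrep v hv).choose_spec.2
  -- injection from V ×ˢ SFin onM into SFin A
  have hWzero : ∀ w ∈ SFin onM, φ w = 0 := by
    intro w hw
    obtain ⟨B, hB, rfl⟩ := mem_SFin.1 hw
    rw [AddMonoidHom.map_multiset_sum]
    apply Multiset.sum_eq_zero
    intro z hz
    obtain ⟨y, hy, rfl⟩ := Multiset.mem_map.1 hz
    exact lineHom_line_zero (Multiset.mem_filter.1 (Multiset.mem_of_le hB hy)).2
  have hinj : (V ×ˢ (SFin onM)).card ≤ (SFin A).card := by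
    apply Finset.card_le_card_of_injOn (fun vw => g vw.1 + vw.2)
    · rintro ⟨v, w⟩ hvw
      obtain ⟨hv, hw⟩ := Finset.mem_product.1 hvw
      obtain ⟨B, hB, hBs⟩ := mem_SFin.1 (hgmem v hv)
      obtain ⟨C, hC, hCs⟩ := mem_SFin.1 hw
      refine mem_SFin.2 ⟨C + B, ?_, by rw [Multiset.sum_add, hCs, hBs, add_comm]⟩
      calc C + B ≤ onM + offM := add_le_add hC hB
        _ = A := Multiset.filter_add_not _ A
    · rintro ⟨v, w⟩ hvw ⟨v', w'⟩ hvw' heq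
      simp only [Finset.coe_product, Set.mem_prod, Finset.mem_coe] at hvw hvw'
      simp only at heq
      have hv : v = v' := by
        have e1 : φ (g v + w) = v := by
          rw [map_add, hgval v hvw.1, hWzero w hvw.2, add_zero]
        have e2 : φ (g v' + w') = v' := by
          rw [map_add, hgval v' hvw'.1, hWzero w' hvw'.2, add_zero]
        rw [← e1, ← e2, heq]
      subst hv
      have hw : w = w' := by
        have := heq
        rwa [add_right_inj] at this
      rw [hw]
  have hprod : (t + 1) * (c + 1) ≤ (SFin A).card := by
    have := Finset.card_product V (SFin onM)
    nlinarith [hVcard, hWcard, hinj, this]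
  -- final arithmetic
  have harith : (k + 2) * p ≤ (t + 1) * (c + 1) := by
    have h1 : ((c:ℤ) - (k+1)) * ((p - 1) - c) ≥ 0 := by
      apply mul_nonneg
      · have : (k:ℤ) + 1 ≤ c := by exact_mod_cast hc1
        omega
      · have : (c:ℤ) < p := by exact_mod_cast hc2
        omega
    have hctz : (c:ℤ) + t = p + k := by exact_mod_cast hct
    have : ((k:ℤ) + 2) * p ≤ ((t:ℤ) + 1) * (c + 1) := by nlinarith
    exact_mod_cast this
  omega

end Fiber

section Hard
variable {p : ℕ} [Fact p.Prime]

/-- The inductive growth bound in the spread-out case: if every line contains at most k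
elements of A, the partial sumsets grow quadratically. -/
lemma hard_induction {k : ℕ} {A : Multiset (Gp p)} (h0 : (0 : Gp p) ∉ A)
    (hline : ∀ x : Gp p, x ≠ 0 →
      Multiset.card (A.filter (fun y => y ∈ zmultiples x)) ≤ k)
    (hk1 : 1 ≤ k)
    (hcards : (SFin A).card < (k + 2) * p) :
    ∀ n : ℕ, ∀ X : Multiset (Gp p), X ≤ A → Multiset.card X = n →
      1 + ∑ i ∈ Finset.range n, (min p (i + 2 - k) - (k + 1)) ≤ (SFin X).card := by
  classical
  have hppos : 0 < p := (Fact.out : p.Prime).pos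
  intro n
  induction n with
  | zero =>
    intro X _ hX0
    rw [Multiset.card_eq_zero.1 hX0, SFin_zero]
    simp
  | succ n ih =>
    intro X hXA hXcard
    have hXne : X ≠ 0 := by
      intro h; rw [h] at hXcard; simp at hXcard
    obtain ⟨x, hx⟩ := Multiset.exists_mem_of_ne_zero hXne
    set Y := X.erase x with hY
    have hcons : x ::ₘ Y = X := Multiset.cons_erase hx
    have hYA : Y ≤ A := le_trans (Multiset.erase_le x X) hXA
    have hYcard : Multiset.card Y = n := by
      rw [hY, Multiset.card_erase_of_mem hx, hXcard]; rfl
    have hxA : x ∈ A := Multiset.mem_of_le hXA hx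
    have hx0 : x ≠ 0 := fun h => h0 (h ▸ hxA)
    have ihY := ih Y hYA hYcard
    -- count of Y-elements on the line of x
    have hpar : Multiset.card (Y.filter (fun y => y ∈ zmultiples x)) + 1 ≤ k := by
      have h1 : (x ::ₘ Y).filter (fun y => y ∈ zmultiples x)
          = x ::ₘ (Y.filter (fun y => y ∈ zmultiples x)) :=
        Multiset.filter_cons_of_pos _ (AddSubgroup.mem_zmultiples x)
      have h2 : Multiset.card ((x ::ₘ Y).filter (fun y => y ∈ zmultiples x))
          ≤ Multiset.card (A.filter (fun y => y ∈ zmultiples x)) :=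
        Multiset.card_le_card (Multiset.filter_le_filter _ (hcons ▸ hXA))
      rw [h1, Multiset.card_cons] at h2
      have := hline x hx0
      omega
    -- the off-line count in Y
    have hjoff : n + 1 - k ≤ Multiset.card (Y.filter (fun y => lineHom x y ≠ 0)) := by
      have hsplit : Multiset.card (Y.filter (fun y => lineHom x y ≠ 0))
          + Multiset.card (Y.filter (fun y => ¬ lineHom x y ≠ 0)) = n := by
        rw [← Multiset.card_add, Multiset.filter_add_not, hYcard]
      have hsub : Y.filter (fun y => ¬ lineHom x y ≠ 0) ≤ Y.filter (fun y => y ∈ zmultiples x) := by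
        apply Multiset.monotone_filter_right
        intro a ha
        exact mem_line_of_lineHom_eq_zero hx0 (not_not.1 ha)
      have := Multiset.card_le_card hsub
      omega
    have hstep := growth_step x hx0 Y
    have hdiv : (SFin Y).card / p ≤ k + 1 := by
      have h1 : (SFin Y).card ≤ (SFin A).card := Finset.card_le_card (SFin_mono hYA)
      have h2 : (SFin Y).card < (k + 2) * p := lt_of_le_of_lt h1 hcards
      exact Nat.lt_succ_iff.1 (Nat.div_lt_iff_lt_mul hppos |>.2 h2)
    rw [hcons] at hstep
    rw [Finset.sum_range_succ]
    have hmono : min p (n + 2 - k) ≤ min p (Multiset.card (Y.filter (fun y => lineHom x y ≠ 0)) + 1) := by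
      have : n + 2 - k ≤ Multiset.card (Y.filter (fun y => lineHom x y ≠ 0)) + 1 := by omega
      omega
    omega

/-- Final numeric bound for the hard case. -/
lemma hard_numeric {p k : ℕ} (h7 : 7 * (k+1)^2 ≤ p) (hk2 : 2 ≤ k) :
    (k + 2) * p ≤ 1 + ∑ i ∈ Finset.range (p + k), (min p (i + 2 - k) - (k + 1)) := by
  have hp63 : 63 ≤ p := by nlinarith
  have hkp : 4 * k + 8 ≤ p := by nlinarith
  set M := p + k - 1 with hM
  have hdrop : ∑ i ∈ Finset.range M, (min p (i + 2 - k) - (k + 1))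
      ≤ ∑ i ∈ Finset.range (p + k), (min p (i + 2 - k) - (k + 1)) :=
    Finset.sum_le_sum_of_subset (Finset.range_subset_range.2 (by omega))
  have hterm : ∀ i ∈ Finset.range M, (min p (i + 2 - k) - (k + 1)) = i + 2 - (2*k + 1) := by
    intro i hi
    have hiM : i < M := Finset.mem_range.1 hi
    have h1 : i + 2 - k ≤ p := by omega
    rw [min_eq_right h1, Nat.sub_sub]
    congr 1
    omega
  rw [Finset.sum_congr rfl hterm] at hdrop
  set Q := ∑ i ∈ Finset.range M, (i + 2 - (2*k + 1)) with hQ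
  set N := ∑ i ∈ Finset.range M, i with hN
  have hQN : (N:ℤ) + M * (2 - (2*(k:ℤ)+1)) ≤ (Q:ℤ) := by
    have h1 : ∑ i ∈ Finset.range M, ((i:ℤ) + (2 - (2*(k:ℤ)+1)))
        ≤ ∑ i ∈ Finset.range M, ((i + 2 - (2*k + 1) : ℕ) : ℤ) := by
      apply Finset.sum_le_sum
      intro i _
      omega
    rw [Finset.sum_add_distrib, Finset.sum_const, Finset.card_range] at h1
    have h2 : ∑ i ∈ Finset.range M, ((i:ℤ)) = ((N:ℤ)) := by
      rw [hN]; push_cast [Nat.cast_sum]; rfl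
    have h3 : ∑ i ∈ Finset.range M, ((i + 2 - (2*k + 1) : ℕ) : ℤ) = (Q:ℤ) := by
      rw [hQ]; push_cast [Nat.cast_sum]; rfl
    rw [h2, h3] at h1
    calc (N:ℤ) + M * (2 - (2*(k:ℤ)+1)) = (N:ℤ) + M • (2 - (2*(k:ℤ)+1)) := by simp
      _ ≤ (Q:ℤ) := h1
  have hNM : (N:ℤ) * 2 = (M:ℤ) * ((M:ℤ) - 1) := by
    have := Finset.sum_range_id_mul_two M
    have hM1 : 1 ≤ M := by omega
    have hcast : ((N * 2 : ℕ) : ℤ) = ((M * (M-1) : ℕ) : ℤ) := by exact_mod_cast congrArg (Nat.cast (R := ℤ)) this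
    push_cast [Nat.cast_sub hM1] at hcast
    linarith
  have hMz : (M:ℤ) = (p:ℤ) + k - 1 := by
    rw [hM]
    have : 1 ≤ p + k := by omega
    push_cast [Nat.cast_sub this]
    ring
  -- final inequality over ℤ
  have hfinal : ((k:ℤ) + 2) * p ≤ 1 + (Q:ℤ) := by
    have h7' : 7 * ((k:ℤ)+1)^2 ≤ p := by exact_mod_cast h7
    have hk2' : (2:ℤ) ≤ k := by exact_mod_cast hk2
    nlinarith [hQN, hNM, hMz, h7', hk2', sq_nonneg ((p:ℤ) - 3*k - 4)]
  have : (k+2) * p ≤ 1 + Q := by exact_mod_cast hfinal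
  omega
end Hard

section Main
variable {p : ℕ} [Fact p.Prime]

lemma zmultiples_ne_bot {x : Gp p} (hx : x ≠ 0) : zmultiples x ≠ ⊥ := by
  intro h
  have : x ∈ zmultiples x := AddSubgroup.mem_zmultiples x
  rw [h, AddSubgroup.mem_bot] at this
  exact hx this

lemma zmultiples_ne_top (x : Gp p) : zmultiples x ≠ ⊤ := by
  haveI : NeZero p := ⟨(Fact.out : p.Prime).ne_zero⟩
  have hp2 : 2 ≤ p := (Fact.out : p.Prime).two_le
  intro h
  have h1 : Nat.card (zmultiples x) = addOrderOf x := Nat.card_zmultiples x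
  have h2 : addOrderOf x ∣ p := by
    apply addOrderOf_dvd_of_nsmul_eq_zero
    have hz : ∀ a : ZMod p, p • a = 0 := fun a => by
      rw [nsmul_eq_mul, ZMod.natCast_self, zero_mul]
    have hxx : p • x = (p • x.1, p • x.2) := rfl
    rw [hxx, hz, hz]
    rfl
  have h3 : addOrderOf x ≤ p := Nat.le_of_dvd (by omega) h2
  have h4 : Nat.card (zmultiples x) = p * p := by
    rw [h]
    have : Nat.card (⊤ : AddSubgroup (Gp p)) = Nat.card (Gp p) := by
      simpa using Nat.card_congr (AddSubgroup.topEquiv (G := Gp p)).toEquiv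
    rw [this]
    rw [Nat.card_prod, Nat.card_zmod]
  nlinarith [h1, h3, h4, hp2]

end Main

end Stmt14

open AddSubgroup

theorem stmt_14 (p : ℕ) (hp : p.Prime) (k : ℕ) (hk2 : 2 ≤ k)
    (hk : (k : ℝ) ≤ Real.sqrt ((p : ℝ) / (2 * Real.log p + 1)) - 1)
    (A : Multiset (ZMod p × ZMod p))
    (h0 : (0 : ZMod p × ZMod p) ∉ A)
    (hcard : Multiset.card A = p + k)
    (hsmall : (sumset A).ncard < (k + 2) * p) :
    ∃ H : AddSubgroup (ZMod p × ZMod p), H ≠ ⊥ ∧ H ≠ ⊤ ∧ inCount A H ≥ p := by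
  classical
  haveI : Fact p.Prime := ⟨hp⟩
  by_contra hno
  push_neg at hno
  have h7 := Stmt14.numeric_key hp hk2 hk
  have hSA : (sumset A).ncard = (Stmt14.SFin A).card := by
    have hset : sumset A = ↑(Stmt14.SFin A) := by
      ext a
      simp only [sumset, Set.mem_setOf_eq, Finset.coe_sort_coe, Finset.mem_coe,
        Stmt14.mem_SFin]
    rw [hset, Set.ncard_coe_finset]
  have hcards : (Stmt14.SFin A).card < (k+2)*p := by rw [← hSA]; exact hsmall
  have hlinecount : ∀ x : ZMod p × ZMod p, x ≠ 0 →
      Multiset.card (A.filter (fun y => y ∈ zmultiples x)) < p := by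
    intro x hx
    have h1 := hno (zmultiples x) (Stmt14.zmultiples_ne_bot hx) (Stmt14.zmultiples_ne_top x)
    have heq : inCount A (zmultiples x) = Multiset.card (A.filter (fun y => y ∈ zmultiples x)) := by
      unfold inCount
      congr 1
    omega
  by_cases hbig : ∃ x : ZMod p × ZMod p, x ≠ 0 ∧
      k + 1 ≤ Multiset.card (A.filter (fun y => y ∈ zmultiples x))
  · obtain ⟨x₀, hx₀, hc1⟩ := hbig
    have := Stmt14.fiber_case h0 hcard hx₀ hc1 (hlinecount x₀ hx₀)
    omega
  · push_neg at hbig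
    have hline : ∀ x : ZMod p × ZMod p, x ≠ 0 →
        Multiset.card (A.filter (fun y => y ∈ zmultiples x)) ≤ k :=
      fun x hx => by have := hbig x hx; omega
    have hmain := Stmt14.hard_induction h0 hline (by omega) hcards (p+k) A le_rfl hcard
    have hnum := Stmt14.hard_numeric h7 hk2
    omega
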